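/- For any field K, the additive group of K (viewed as the multiplicative group Multiplicative K with its additive group structure) is equationally Artinian. -/
import Mathlib

section
variable (K : Type*) [Field K] (n : ℕ)

/-- The affine functional on `K × (Fin n → K)` attached to a tuple `e`. -/
noncomputable def ellK (e : Fin n → Multiplicative K) : (K × (Fin n → K)) →ₗ[K] K where
  toFun v := v.1 + ∑ i, v.2 i * (e i).toAdd
  map_add' x y := by simp [add_mul, Finset.sum_add_distrib]; ring
  map_smul' c x := by simp [mul_add, Finset.mul_sum, mul_assoc]

noncomputable def chiK : Monoid.Coprod (Multiplicative K) (FreeGroup (Fin n)) →*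
    Multiplicative (K × (Fin n → K)) :=
  Monoid.Coprod.lift
    (AddMonoidHom.toMultiplicative (AddMonoidHom.inl K (Fin n → K)))
    (FreeGroup.lift (fun i => Multiplicative.ofAdd ((0 : K), Pi.single i (1 : K))))

theorem theta_comp_chi (e : Fin n → Multiplicative K) :
    (AddMonoidHom.toMultiplicative (ellK K n e).toAddMonoidHom).comp (chiK K n) =
      Monoid.Coprod.lift (MonoidHom.id (Multiplicative K)) (FreeGroup.lift e) := by
  apply Monoid.Coprod.hom_ext
  · ext h
    simp [chiK, ellK]
  · apply FreeGroup.ext_hom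
    intro i
    simp [chiK, ellK, Pi.single_apply]
end

/-- The Diophantine radical `Rad_H(E)` of a subset `E ⊆ Hⁿ` (coefficients from `H` itself). -/
def RadH (H : Type*) [Group H] {n : ℕ} (E : Set (Fin n → H)) :
    Set (Monoid.Coprod H (FreeGroup (Fin n))) :=
  {w | ∀ e ∈ E, Monoid.Coprod.lift (MonoidHom.id H) (FreeGroup.lift e) w = 1}

/-- A group is equationally Artinian (Diophantine sense). -/
def EquationallyArtinian (H : Type*) [Group H] : Prop :=
  ∀ (n : ℕ) (E : Set (Fin n → H)), ∃ E₀ ⊆ E, E₀.Finite ∧ RadH H E₀ = RadH H E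

/-- The additive group of any field is equationally Artinian. -/
theorem fieldAdditive_equationallyArtinian (K : Type*) [Field K] :
    EquationallyArtinian (Multiplicative K) := by
  intro n E
  have key : ∀ (e : Fin n → Multiplicative K)
      (w : Monoid.Coprod (Multiplicative K) (FreeGroup (Fin n))),
      Monoid.Coprod.lift (MonoidHom.id (Multiplicative K)) (FreeGroup.lift e) w = 1 ↔
        (chiK K n w).toAdd ∈ LinearMap.ker (ellK K n e) := by
    intro e w
    rw [← theta_comp_chi]
    simp [LinearMap.mem_ker]
  set S : Set (Submodule K (K × (Fin n → K))) :=
    {p | ∃ F ⊆ E, F.Finite ∧ p = ⨅ e ∈ F, LinearMap.ker (ellK K n e)} with hS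
  have hne : S.Nonempty := ⟨⊤, ∅, by simp⟩
  obtain ⟨p, ⟨E₀, hE₀E, hfin, rfl⟩, hmin⟩ := IsArtinian.set_has_minimal S hne
  refine ⟨E₀, hE₀E, hfin, ?_⟩
  have hle : ∀ e ∈ E, (⨅ f ∈ E₀, LinearMap.ker (ellK K n f)) ≤ LinearMap.ker (ellK K n e) := by
    intro e he
    have hq : (⨅ f ∈ insert e E₀, LinearMap.ker (ellK K n f)) ∈ S :=
      ⟨insert e E₀, Set.insert_subset he hE₀E, hfin.insert e, rfl⟩
    have hqle : (⨅ f ∈ insert e E₀, LinearMap.ker (ellK K n f)) ≤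
        ⨅ f ∈ E₀, LinearMap.ker (ellK K n f) :=
      biInf_mono (Set.subset_insert e E₀)
    have heq : (⨅ f ∈ insert e E₀, LinearMap.ker (ellK K n f)) =
        ⨅ f ∈ E₀, LinearMap.ker (ellK K n f) :=
      hqle.lt_or_eq.resolve_left (hmin _ hq)
    calc (⨅ f ∈ E₀, LinearMap.ker (ellK K n f)) = _ := heq.symm
      _ ≤ LinearMap.ker (ellK K n e) := biInf_le _ (Set.mem_insert e E₀)
  ext w
  simp only [RadH, Set.mem_setOf_eq]
  constructor
  · intro h e he
    rw [key]
    have : (chiK K n w).toAdd ∈ ⨅ f ∈ E₀, LinearMap.ker (ellK K n f) := by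
      rw [Submodule.mem_iInf]
      intro f
      rw [Submodule.mem_iInf]
      intro hf
      exact (key f w).mp (h f hf)
    exact hle e he this
  · intro h e he
    exact h e (hE₀E he)
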